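/- arXiv:1012.1502 — 4 statements merged into one kernel-verified Lean document; each statement's English description precedes it below -/
import Mathlib

section
/- Let P and S be disjoint finite sets of points in the Euclidean plane, let k be a natural number, and let r > 0. Suppose there exists a subset S' ⊆ S with |S'| ≤ k and a tree whose vertex set is P ∪ S' all of whose edges have Euclidean length at most r (in particular, all weights w_r(p,q) for p,q ∈ P are finite). Let T be any spanning tree of the complete graph on vertex set P that minимizes the total weight ∑_{{p,q} ∈ E(T)} w_r(p,q) among all spanning trees of the complete graph on P. Then ∑_{{p,q} ∈ E(T)} ⌊w_r(p,q)/2⌋ ≤ k. -/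
open scoped ENNReal

noncomputable section

/-- Points of the Euclidean plane. -/
abbrev Pt : Type := EuclideanSpace ℝ (Fin 2)

noncomputable instance : DecidableEq Pt := Classical.decEq _

/-- The graph `G_r` on vertex set `P ∪ S`: two distinct points of `P ∪ S` are adjacent
iff their Euclidean distance is at most `r`.  (Points outside `P ∪ S` are isolated.) -/
def stGraph (P S : Finset Pt) (r : ℝ) : SimpleGraph Pt where
  Adj x y := x ≠ y ∧ x ∈ P ∪ S ∧ y ∈ P ∪ S ∧ dist x y ≤ r
  symm := by
    constructor
    rintro x y ⟨h1, h2, h3, h4⟩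
    exact ⟨h1.symm, h3, h2, by rwa [dist_comm]⟩
  loopless := by constructor; rintro x ⟨h, -⟩; exact h rfl

/-- `wgt P S r p q` : the minimum, over all paths from `p` to `q` in `G_r`, of the number of
vertices from `S` appearing on the path; `⊤` if there is no such path. -/
def wgt (P S : Finset Pt) (r : ℝ) (p q : Pt) : ℕ∞ :=
  sInf {n : ℕ∞ | ∃ wk : (stGraph P S r).Walk p q, wk.IsPath ∧
    n = ((wk.support.filter (fun x => decide (x ∈ S))).length : ℕ∞)}

/-- The weight as a function on unordered pairs (it is symmetric, so the symmetrization
`min (wgt p q) (wgt q p)` coincides with `wgt p q`). -/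
def ewgt (P S : Finset Pt) (r : ℝ) : Sym2 Pt → ℕ∞ :=
  Sym2.lift ⟨fun p q => min (wgt P S r p q) (wgt P S r q p), fun _ _ => min_comm _ _⟩

namespace Aux

/-- count of S₀-vertices on a walk -/
def cnt (S₀ : Finset Pt) {G : SimpleGraph Pt} {p q : Pt} (wk : G.Walk p q) : ℕ :=
  (wk.support.filter (fun x => decide (x ∈ S₀))).length

lemma wgt_le_cnt {P S₀ : Finset Pt} {r : ℝ} {p q : Pt} (wk : (stGraph P S₀ r).Walk p q)
    (hwk : wk.IsPath) : wgt P S₀ r p q ≤ (cnt S₀ wk : ℕ∞) :=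
  sInf_le ⟨wk, hwk, rfl⟩

lemma cnt_bypass_le {P S₀ : Finset Pt} {r : ℝ} {p q : Pt} (wk : (stGraph P S₀ r).Walk p q) :
    cnt S₀ wk.bypass ≤ cnt S₀ wk := by
  unfold cnt
  rw [List.toFinset_card_of_nodup ((wk.bypass_isPath.support_nodup).filter _) |>.symm]
  refine le_trans (Finset.card_le_card ?_) (List.toFinset_card_le _)
  intro x hx
  simp only [List.mem_toFinset, List.mem_filter] at *
  exact ⟨wk.support_bypass_subset hx.1, hx.2⟩

lemma wgt_le_cnt_walk {P S₀ : Finset Pt} {r : ℝ} {p q : Pt} (wk : (stGraph P S₀ r).Walk p q) :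
    wgt P S₀ r p q ≤ (cnt S₀ wk : ℕ∞) :=
  le_trans (wgt_le_cnt wk.bypass wk.bypass_isPath) (by exact_mod_cast cnt_bypass_le wk)

lemma wgt_exists {P S₀ : Finset Pt} {r : ℝ} {p q : Pt} (hne : wgt P S₀ r p q ≠ ⊤) :
    ∃ wk : (stGraph P S₀ r).Walk p q, wk.IsPath ∧ (cnt S₀ wk : ℕ∞) = wgt P S₀ r p q := by
  have hnon : {n : ℕ∞ | ∃ wk : (stGraph P S₀ r).Walk p q, wk.IsPath ∧
      n = ((wk.support.filter (fun x => decide (x ∈ S₀))).length : ℕ∞)}.Nonempty := by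
    by_contra hc
    rw [Set.not_nonempty_iff_eq_empty] at hc
    exact hne (by rw [wgt, hc, sInf_empty])
  obtain ⟨wk, hwk, heq⟩ := csInf_mem hnon
  exact ⟨wk, hwk, heq.symm⟩

lemma wgt_comm {P S₀ : Finset Pt} {r : ℝ} (p q : Pt) : wgt P S₀ r p q = wgt P S₀ r q p := by
  unfold wgt
  congr 1
  ext n
  constructor <;> rintro ⟨wk, hwk, rfl⟩ <;>
    exact ⟨wk.reverse, hwk.reverse, by
      rw [SimpleGraph.Walk.support_reverse, List.filter_reverse, List.length_reverse]⟩

lemma cnt_append {P S₀ : Finset Pt} {r : ℝ} {p q z : Pt} (w₁ : (stGraph P S₀ r).Walk p q)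
    (w₂ : (stGraph P S₀ r).Walk q z) :
    cnt S₀ (w₁.append w₂) + (if q ∈ S₀ then 1 else 0) = cnt S₀ w₁ + cnt S₀ w₂ := by
  unfold cnt
  rw [SimpleGraph.Walk.support_append, List.filter_append, List.length_append]
  have h2 : w₂.support = q :: w₂.support.tail := w₂.support_eq_cons
  rw [show (w₂.support.filter (fun x => decide (x ∈ S₀))) =
      ((q :: w₂.support.tail).filter (fun x => decide (x ∈ S₀))) from by rw [← h2]]
  rw [List.filter_cons]
  by_cases hq : q ∈ S₀ <;> simp [hq] <;> ring

lemma support_mem_union {P S₀ : Finset Pt} {r : ℝ} {p q : Pt} (wk : (stGraph P S₀ r).Walk p q)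
    (hp : p ∈ P ∪ S₀) : ∀ x ∈ wk.support, x ∈ P ∪ S₀ := by
  induction wk with
  | nil => intro x hx; simp at hx; subst hx; exact hp
  | cons h w ih =>
    intro x hx
    rw [SimpleGraph.Walk.support_cons] at hx
    rcases List.mem_cons.mp hx with rfl | hx
    · exact hp
    · exact ih h.2.2.1 x hx

lemma wgt_self {P S₀ : Finset Pt} {r : ℝ} {p : Pt} (hp : p ∉ S₀) : wgt P S₀ r p p = 0 := by
  refine le_antisymm ?_ (zero_le)
  have := wgt_le_cnt (SimpleGraph.Walk.nil : (stGraph P S₀ r).Walk p p) (by simp)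
  simpa [cnt, hp] using this

section Mono
variable {P S S' : Finset Pt} {r : ℝ}

lemma stGraph_mono (hS' : S' ⊆ S) : stGraph P S' r ≤ stGraph P S r := by
  rintro x y ⟨h1, h2, h3, h4⟩
  exact ⟨h1, Finset.union_subset_union_right hS' h2, Finset.union_subset_union_right hS' h3, h4⟩

lemma wgt_mono (hPS : Disjoint P S) (hS' : S' ⊆ S) {x y : Pt} (hx : x ∈ P ∪ S') :
    wgt P S r x y ≤ wgt P S' r x y := by
  by_cases hne : wgt P S' r x y = ⊤
  · simp [hne]
  obtain ⟨wk, hwk, heq⟩ := wgt_exists hne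
  rw [← heq]
  have hle := stGraph_mono (P := P) (r := r) hS'
  set wk' : (stGraph P S r).Walk x y :=
    wk.transfer _ (fun e he => SimpleGraph.edgeSet_mono hle (wk.edges_subset_edgeSet he))
  refine le_trans (wgt_le_cnt_walk wk') (by
    norm_cast
    unfold cnt
    rw [SimpleGraph.Walk.support_transfer]
    rw [List.filter_congr]
    intro v hv
    have hv' := support_mem_union wk hx v hv
    rcases Finset.mem_union.mp hv' with hvP | hvS'
    · have hvnS : v ∉ S := Finset.disjoint_left.mp hPS hvP
      have hvnS' : v ∉ S' := fun hc => hvnS (hS' hc)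
      simp [hvnS, hvnS']
    · simp [hS' hvS', hvS'])

lemma wgt_triangle (hy : y ∈ S') {x z : Pt} :
    wgt P S' r x z + 1 ≤ wgt P S' r x y + wgt P S' r y z := by
  by_cases h1 : wgt P S' r x y = ⊤
  · simp [h1]
  by_cases h2 : wgt P S' r y z = ⊤
  · simp [h2]
  obtain ⟨w1, _, e1⟩ := wgt_exists h1
  obtain ⟨w2, _, e2⟩ := wgt_exists h2
  rw [← e1, ← e2]
  have := cnt_append w1 w2
  rw [if_pos hy] at this
  have hle := wgt_le_cnt_walk (w1.append w2)
  calc wgt P S' r x z + 1 ≤ (cnt S' (w1.append w2) : ℕ∞) + 1 := by exact add_le_add_left hle 1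
    _ = ((cnt S' (w1.append w2) + 1 : ℕ) : ℕ∞) := by norm_cast
    _ = ((cnt S' w1 + cnt S' w2 : ℕ) : ℕ∞) := by rw [this]
    _ = _ := by norm_cast
end Mono

section RelF
variable (P S' : Finset Pt) (r : ℝ)

def Rel (t : ℕ) : ↥P → ↥P → Prop :=
  Relation.ReflTransGen (fun u v : ↥P => wgt P S' r u.val v.val ≤ (t : ℕ∞))

variable {P S' r}

lemma Rel.symm {t : ℕ} {a b : ↥P} (h : Rel P S' r t a b) : Rel P S' r t b a := by
  induction h with
  | refl => exact Relation.ReflTransGen.refl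
  | tail _ hstep ih =>
      exact Relation.ReflTransGen.trans
        (Relation.ReflTransGen.single (by rw [wgt_comm]; exact hstep)) ih

lemma Rel.mono {t t' : ℕ} (htt : t ≤ t') {a b : ↥P} (h : Rel P S' r t a b) :
    Rel P S' r t' a b := by
  induction h with
  | refl => exact Relation.ReflTransGen.refl
  | tail _ hstep ih =>
      exact ih.tail (le_trans hstep (by exact_mod_cast Nat.cast_le.mpr htt))

variable (P S' r)

def FD (t : ℕ) (a : ↥P) (y : Pt) : ℕ∞ :=
  ⨅ x : {x : ↥P // Rel P S' r t a x}, wgt P S' r x.1.val y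

variable {P S' r}

lemma FD_le {t : ℕ} {a x : ↥P} {y : Pt} (hx : Rel P S' r t a x) :
    FD P S' r t a y ≤ wgt P S' r x.val y :=
  iInf_le _ (⟨x, hx⟩ : {x : ↥P // Rel P S' r t a x})

lemma FD_exists {t : ℕ} {a : ↥P} {y : Pt} (hne : FD P S' r t a y ≠ ⊤) :
    ∃ x : ↥P, Rel P S' r t a x ∧ wgt P S' r x.val y = FD P S' r t a y := by
  have hnon : (Set.range fun x : {x : ↥P // Rel P S' r t a x} => wgt P S' r x.1.val y).Nonempty :=
    ⟨_, ⟨⟨a, Relation.ReflTransGen.refl⟩, rfl⟩⟩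
  have hmem := csInf_mem hnon
  obtain ⟨⟨x, hx⟩, heq⟩ := hmem
  refine ⟨x, hx, ?_⟩
  simp only at heq
  rw [heq, FD, iInf]

lemma FD_self {t : ℕ} {a : ↥P} (hPS' : Disjoint P S') : FD P S' r t a a.val = 0 := by
  refine le_antisymm ?_ (zero_le)
  have h := FD_le (P := P) (S' := S') (r := r) (t := t) (y := a.val)
    (Relation.ReflTransGen.refl (a := a))
  rwa [wgt_self (Finset.disjoint_left.mp hPS' a.2)] at h

lemma FD_step {t : ℕ} {a : ↥P} {y y' : Pt} (hadj : (stGraph P S' r).Adj y y') :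
    FD P S' r t a y' ≤ FD P S' r t a y + (if y' ∈ S' then 1 else 0) := by
  by_cases hne : FD P S' r t a y = ⊤
  · rw [hne, top_add]
    exact le_top
  obtain ⟨x, hx, heq⟩ := FD_exists hne
  have hw : wgt P S' r x.val y ≠ ⊤ := by rw [heq]; exact hne
  obtain ⟨wk, _, hcnt⟩ := wgt_exists hw
  set w2 : (stGraph P S' r).Walk y y' := SimpleGraph.Walk.cons hadj SimpleGraph.Walk.nil
  have hc2 : cnt S' w2 = (if y ∈ S' then 1 else 0) + (if y' ∈ S' then 1 else 0) := by
    by_cases h1 : y ∈ S' <;> by_cases h2 : y' ∈ S' <;>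
      simp [cnt, w2, List.filter_cons, h1, h2]
  have happ := cnt_append wk w2
  have hle := wgt_le_cnt_walk (wk.append w2)
  have : cnt S' (wk.append w2) = cnt S' wk + (if y' ∈ S' then 1 else 0) := by omega
  calc FD P S' r t a y' ≤ wgt P S' r x.val y' := FD_le hx
    _ ≤ (cnt S' (wk.append w2) : ℕ∞) := wgt_le_cnt_walk _
    _ = (cnt S' wk : ℕ∞) + ((if y' ∈ S' then 1 else 0 : ℕ) : ℕ∞) := by rw [this]; norm_cast
    _ ≤ FD P S' r t a y + (if y' ∈ S' then 1 else 0) := by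
        rw [hcnt, heq]
        gcongr
        by_cases h : y' ∈ S' <;> simp [h]

lemma FD_big {t : ℕ} {a p₀ : ↥P} (hnr : ¬ Rel P S' r t a p₀) :
    (t : ℕ∞) + 1 ≤ FD P S' r t a p₀.val := by
  by_contra hc
  push_neg at hc
  have hne : FD P S' r t a p₀.val ≠ ⊤ := by
    intro hh; rw [hh] at hc; exact not_top_lt hc
  obtain ⟨x, hx, heq⟩ := FD_exists hne
  rw [← heq] at hc
  have hle : wgt P S' r x.val p₀.val ≤ (t : ℕ∞) := Order.le_of_lt_add_one hc
  exact hnr (hx.tail hle)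
lemma ivt {t j : ℕ} {a : ↥P} {y z : Pt} (q : (stGraph P S' r).Walk y z)
    (hz : ((j : ℕ∞) + 1) ≤ FD P S' r t a z + (if z ∈ S' then 0 else 1)) :
    FD P S' r t a y + (if y ∈ S' then 0 else 1) ≤ (j : ℕ∞) →
    ∃ s ∈ S', FD P S' r t a s = (j : ℕ∞) := by
  induction q with
  | nil =>
    intro hy
    exact absurd (hz.trans hy) (not_le.mpr (by exact_mod_cast Nat.lt_succ_self j))
  | @cons y m z hadj q' ih =>
    intro hy
    by_cases hm : FD P S' r t a m + (if m ∈ S' then 0 else 1) ≤ (j : ℕ∞)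
    · exact ih hz hm
    push_neg at hm
    have hm' : (j : ℕ∞) + 1 ≤ FD P S' r t a m + (if m ∈ S' then 0 else 1) :=
      Order.add_one_le_of_lt hm
    have hstep := FD_step (t := t) (a := a) hadj
    by_cases hyS : y ∈ S'
    · rw [if_pos hyS, add_zero] at hy
      refine ⟨y, hyS, le_antisymm hy ?_⟩
      by_cases hmS : m ∈ S'
      · rw [if_pos hmS, add_zero] at hm'
        rw [if_pos hmS] at hstep
        have : (j : ℕ∞) + 1 ≤ FD P S' r t a y + 1 := hm'.trans hstep
        exact ENat.add_le_add_iff_right (by simp) |>.mp this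
      · rw [if_neg hmS] at hm'
        rw [if_neg hmS, add_zero] at hstep
        have : (j : ℕ∞) + 1 ≤ FD P S' r t a y + 1 :=
          hm'.trans (add_le_add_left hstep 1)
        exact ENat.add_le_add_iff_right (by simp) |>.mp this
    · exfalso
      rw [if_neg hyS] at hy
      by_cases hmS : m ∈ S'
      · rw [if_pos hmS, add_zero] at hm'
        rw [if_pos hmS] at hstep
        exact absurd (hm'.trans (hstep.trans hy)) (not_le.mpr (by exact_mod_cast Nat.lt_succ_self j))
      · rw [if_neg hmS] at hm'
        rw [if_neg hmS, add_zero] at hstep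
        have : (j : ℕ∞) + 1 ≤ FD P S' r t a y + 1 := hm'.trans (add_le_add_left hstep 1)
        have hle : (j : ℕ∞) ≤ FD P S' r t a y := ENat.add_le_add_iff_right (by simp) |>.mp this
        have : (j : ℕ∞) + 1 ≤ (j : ℕ∞) := le_trans (add_le_add_left hle 1) hy
        exact absurd this (not_le.mpr (by exact_mod_cast Nat.lt_succ_self j))

end RelF

section TreeStuff
open SimpleGraph
section Tree
variable {V : Type} [DecidableEq V]

/-- every vertex reaches one of the endpoints of a tree edge after deleting it -/
lemma reach_endpoint_aux {T : SimpleGraph V} (u v : V) {x y : V}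
    (w : T.Walk x y) :
    (T \ fromEdgeSet {s(u,v)}).Reachable x y ∨ (T \ fromEdgeSet {s(u,v)}).Reachable x u ∨
      (T \ fromEdgeSet {s(u,v)}).Reachable x v := by
  induction w with
  | nil => exact Or.inl (Reachable.refl _)
  | @cons x c _ hadj q ih =>
    by_cases hec : s(x, c) = s(u, v)
    · rw [Sym2.eq_iff] at hec
      rcases hec with ⟨rfl, rfl⟩ | ⟨rfl, rfl⟩
      · exact Or.inr (Or.inl (Reachable.refl _))
      · exact Or.inr (Or.inr (Reachable.refl _))
    · have hadj' : (T \ fromEdgeSet {s(u,v)}).Adj x c := by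
        refine ⟨hadj, ?_⟩
        simp only [fromEdgeSet_adj, Set.mem_singleton_iff]
        tauto
      rcases ih with h | h | h
      · exact Or.inl ((hadj'.reachable).trans h)
      · exact Or.inr (Or.inl ((hadj'.reachable).trans h))
      · exact Or.inr (Or.inr ((hadj'.reachable).trans h))

lemma reach_endpoint {T : SimpleGraph V} {u v : V} (x : V)
    (w : T.Walk x u) :
    (T \ fromEdgeSet {s(u,v)}).Reachable x u ∨ (T \ fromEdgeSet {s(u,v)}).Reachable x v := by
  rcases reach_endpoint_aux u v w with h | h | h
  · exact Or.inl h
  · exact Or.inl h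
  · exact Or.inr h

lemma endpoint_edge {G : SimpleGraph V} {x z : V} {p : G.Walk x z} (hp : p.IsPath)
    {f g : Sym2 V} (hf : f ∈ p.edges) (hg : g ∈ p.edges) (hzf : z ∈ f) (hzg : z ∈ g) :
    f = g := by
  induction p with
  | nil => simp at hf
  | @cons x c z hadj q ih =>
    rw [Walk.cons_isPath_iff] at hp
    rw [Walk.edges_cons, List.mem_cons] at hf hg
    have hxz : x ≠ z := by
      intro hcontra
      subst hcontra
      exact hp.2 q.end_mem_support
    rcases hf with rfl | hf <;> rcases hg with rfl | hg
    · rfl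
    · exfalso
      rcases Sym2.mem_iff.mp hzf with rfl | rfl
      · exact hxz rfl
      · have : q = Walk.nil := Walk.isPath_iff_eq_nil.mp hp.1
        subst this; simp at hg
    · exfalso
      rcases Sym2.mem_iff.mp hzg with rfl | rfl
      · exact hxz rfl
      · have : q = Walk.nil := Walk.isPath_iff_eq_nil.mp hp.1
        subst this; simp at hf
    · exact ih hp.1 hf hg hzf hzg

end Tree

section Exchange
variable {V : Type} [DecidableEq V] [Fintype V]

lemma swap_isTree {T : SimpleGraph V} (hT : T.IsTree) {u v a b : V} (huv : T.Adj u v)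
    (hab : a ≠ b)
    (hnr : ¬(T \ fromEdgeSet {s(u,v)}).Reachable a b) :
    ((T \ fromEdgeSet {s(u,v)}) ⊔ fromEdgeSet {s(a,b)}).IsTree := by
  set D := T \ fromEdgeSet {s(u,v)} with hD
  set T' := D ⊔ fromEdgeSet {s(a,b)} with hT'
  have hDT : D ≤ T := sdiff_le
  have habT' : T'.Adj a b := by
    have : (fromEdgeSet {s(a,b)}).Adj a b := by
      rw [fromEdgeSet_adj]
      exact ⟨rfl, hab⟩
    exact (sup_adj _ _ _ _).mpr (Or.inr this)
  -- connectivity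
  have hreach : ∀ x : V, D.Reachable x u ∨ D.Reachable x v := fun x =>
    reach_endpoint x (hT.isConnected.preconnected x u).some
  have huvT' : T'.Reachable u v := by
    rcases hreach a with ha | ha <;> rcases hreach b with hb | hb
    · exact absurd (ha.trans hb.symm) hnr
    · exact ((ha.mono le_sup_left).symm.trans (habT'.reachable)).trans (hb.mono le_sup_left)
    · exact ((hb.mono le_sup_left).symm.trans (habT'.reachable.symm)).trans
        (ha.mono le_sup_left)
    · exact absurd (ha.trans hb.symm) hnr
  have hconn : T'.Connected := by
    rw [connected_iff]
    refine ⟨fun x y => ?_, hT.isConnected.nonempty⟩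
    have hx := hreach x
    have hy := hreach y
    have key : ∀ z : V, T'.Reachable z u := by
      intro z
      rcases hreach z with h | h
      · exact h.mono le_sup_left
      · exact (h.mono le_sup_left).trans huvT'.symm
    exact (key x).trans (key y).symm
  -- acyclicity
  have hacyc : T'.IsAcyclic := by
    intro x c hc
    by_cases hmem : s(a, b) ∈ c.edges
    · have : T'.Adj a b ∧ (T' \ fromEdgeSet {s(a,b)}).Reachable a b :=
        (adj_and_reachable_delete_edges_iff_exists_cycle).mpr ⟨x, c, hc, hmem⟩
      refine hnr (this.2.mono ?_)
      intro p q hpq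
      obtain ⟨hpq1, hpq2⟩ := hpq
      rcases (sup_adj _ _ _ _).mp hpq1 with h | h
      · exact h
      · exfalso
        apply hpq2
        simp only [fromEdgeSet_adj, Set.mem_singleton_iff] at h ⊢
        exact ⟨h.1, h.2⟩
    · -- cycle avoiding the new edge lives in T
      have hedges : ∀ e ∈ c.edges, e ∈ T.edgeSet := by
        intro e he
        have := c.edges_subset_edgeSet he
        rw [edgeSet_sup] at this
        rcases this with h | h
        · rw [edgeSet_sdiff] at h
          exact h.1
        · exfalso
          rw [edgeSet_fromEdgeSet] at h
          have : e = s(a, b) := h.1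
          exact hmem (this ▸ he)
      exact hT.IsAcyclic (c.transfer T hedges) (hc.transfer hedges)
  exact ⟨hconn, hacyc⟩

end Exchange

section CutMin
variable {V : Type} [DecidableEq V] [Fintype V] {W : Sym2 V → ℕ∞}

lemma cut_min {T : SimpleGraph V} (hT : T.IsTree)
    (hmin : ∀ T'' : SimpleGraph V, T''.IsTree →
      ∑ e ∈ T.edgeSet.toFinite.toFinset, W e ≤ ∑ e ∈ T''.edgeSet.toFinite.toFinset, W e)
    (hfin : ∀ e, W e ≠ ⊤)
    {u v a b : V} (huv : T.Adj u v) (hab : a ≠ b)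
    (hnr : ¬(T \ fromEdgeSet {s(u,v)}).Reachable a b) :
    W s(u,v) ≤ W s(a,b) := by
  by_cases heq : s(a,b) = s(u,v)
  · rw [heq]
  set D := T \ fromEdgeSet {s(u,v)} with hD
  set T' := D ⊔ fromEdgeSet {s(a,b)} with hT'def
  have hT' : T'.IsTree := swap_isTree hT huv hab hnr
  have hmin' := hmin T' hT'
  have hanb : ¬ T.Adj a b := by
    intro hTab
    apply hnr
    refine Adj.reachable ⟨hTab, ?_⟩
    rw [fromEdgeSet_adj]
    rintro ⟨h1, -⟩
    exact heq h1
  have hE' : T'.edgeSet.toFinite.toFinset =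
      insert s(a,b) ((T.edgeSet.toFinite.toFinset).erase s(u,v)) := by
    ext e
    simp only [Set.Finite.mem_toFinset, Finset.mem_insert, Finset.mem_erase,
      Set.Finite.mem_toFinset]
    rw [hT'def, edgeSet_sup, hD, edgeSet_sdiff, edgeSet_fromEdgeSet, edgeSet_fromEdgeSet]
    constructor
    · intro hmem
      rcases (Set.mem_union _ _ _).mp hmem with ⟨h1, h2⟩ | ⟨h1, h2⟩
      · right
        have hnd := T.not_isDiag_of_mem_edgeSet h1
        have h2' : e = s(u,v) → e.IsDiag := by simpa using h2
        exact ⟨fun hc => hnd (h2' hc), h1⟩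
      · left
        simpa using h1
    · rintro (rfl | ⟨h1, h2⟩)
      · apply Set.mem_union_right
        refine ⟨rfl, ?_⟩
        simp only [Sym2.mem_diagSet, Sym2.isDiag_iff_proj_eq]
        exact hab
      · apply Set.mem_union_left
        refine ⟨h2, ?_⟩
        rintro ⟨hc1, -⟩
        exact h1 hc1
  have hein : s(u,v) ∈ T.edgeSet.toFinite.toFinset := by
    rw [Set.Finite.mem_toFinset]
    exact huv
  have habnin : s(a,b) ∉ (T.edgeSet.toFinite.toFinset).erase s(u,v) := by
    intro hc
    rw [Finset.mem_erase, Set.Finite.mem_toFinset] at hc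
    exact hanb hc.2
  have hfinsum : ∑ e ∈ (T.edgeSet.toFinite.toFinset).erase s(u,v), W e ≠ ⊤ := by
    intro hc
    rcases WithTop.sum_eq_top.mp hc with ⟨f, -, hf⟩
    exact hfin f hf
  rw [hE', Finset.sum_insert habnin, ← Finset.add_sum_erase _ _ hein] at hmin'
  rw [add_comm (W s(a,b)) _, add_comm (W s(u,v)) _] at hmin'
  exact (WithTop.add_le_add_iff_left hfinsum).mp hmin'

end CutMin

section FarEq
variable {V : Type} [DecidableEq V]

lemma path_avoiding {T : SimpleGraph V} {f : Sym2 V} (hd : ¬ f.IsDiag) {x y : V}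
    (hR : (T \ fromEdgeSet {f}).Reachable x y) :
    ∃ p : T.Walk x y, p.IsPath ∧ f ∉ p.edges := by
  obtain ⟨w⟩ := hR
  set w' := w.toPath
  have hsub : ∀ e ∈ (w' : (T \ fromEdgeSet {f}).Walk x y).edges,
      e ∈ (T \ fromEdgeSet {f}).edgeSet := fun e he =>
    (w' : (T \ fromEdgeSet {f}).Walk x y).edges_subset_edgeSet he
  have hle : (T \ fromEdgeSet {f}) ≤ T := sdiff_le
  refine ⟨(w' : (T \ fromEdgeSet {f}).Walk x y).transfer T
    (fun e he => edgeSet_mono hle (hsub e he)), w'.2.transfer _, ?_⟩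
  rw [SimpleGraph.Walk.edges_transfer]
  intro hc
  have := hsub _ hc
  rw [edgeSet_sdiff, edgeSet_fromEdgeSet] at this
  exact this.2 ⟨rfl, hd⟩

lemma walk_eq_endpoints {G : SimpleGraph V} {x y : V} (w : G.Walk x y) (h : w.length = 0) :
    x = y := by
  cases w with
  | nil => rfl
  | cons _ _ => simp at h

lemma far_eq {T : SimpleGraph V} (hT : T.IsTree) (p₀ : V) {u v u' v' : V}
    (he : T.Adj u v) (he' : T.Adj u' v')
    (hnv : ¬(T \ fromEdgeSet {s(u,v)}).Reachable p₀ v)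
    (hnv' : ¬(T \ fromEdgeSet {s(u',v')}).Reachable p₀ v')
    (h1 : (T \ fromEdgeSet {s(u,v)}).Reachable v v')
    (h2 : (T \ fromEdgeSet {s(u',v')}).Reachable v' v) : s(u,v) = s(u',v') := by
  have hpu : ∀ {x y : V} (p q : T.Path x y), p = q := fun p q => hT.IsAcyclic.path_unique p q
  -- the unique path from p₀ to v
  obtain ⟨pw⟩ := hT.isConnected.preconnected p₀ v
  set pP := pw.toPath with hpP
  set p := (pP : T.Walk p₀ v) with hpdef
  have hp : p.IsPath := pP.2
  -- the unique path from p₀ to v'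
  obtain ⟨pw'⟩ := hT.isConnected.preconnected p₀ v'
  set pP' := pw'.toPath with hpP'
  set p' := (pP' : T.Walk p₀ v') with hpdef'
  have hp' : p'.IsPath := pP'.2
  -- e ∈ p.edges
  have he_in : s(u,v) ∈ p.edges := by
    by_contra hc
    exact hnv ⟨p.toDeleteEdges {s(u,v)} (fun e hee => by
      simp only [Set.mem_singleton_iff]
      intro hq; exact hc (hq ▸ hee))⟩
  have he'_in : s(u',v') ∈ p'.edges := by
    by_contra hc
    exact hnv' ⟨p'.toDeleteEdges {s(u',v')} (fun e hee => by
      simp only [Set.mem_singleton_iff]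
      intro hq; exact hc (hq ▸ hee))⟩
  -- T-path from v to v' avoiding both e and e'
  obtain ⟨q, hq, hqe⟩ := path_avoiding (by simp [he.ne]) h1
  obtain ⟨q2, hq2, hq2e⟩ := path_avoiding (by simp [he'.ne]) h2
  have hq2q : q2 = q.reverse := by
    have := hpu ⟨q2, hq2⟩ ⟨q.reverse, hq.reverse⟩
    exact congrArg Subtype.val this
  have hqe' : s(u',v') ∉ q.edges := by
    intro hc
    apply hq2e
    rw [hq2q, SimpleGraph.Walk.edges_reverse, List.mem_reverse]
    exact hc
  -- e' ∈ p.edges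
  have hpq_eq : ((p.append q).toPath : T.Walk p₀ v') = p' :=
    congrArg Subtype.val (hpu (p.append q).toPath pP')
  have he'_in_p : s(u',v') ∈ p.edges := by
    have hmem : s(u',v') ∈ (p.append q).edges :=
      SimpleGraph.Walk.edges_toPath_subset (p.append q) (by rw [hpq_eq]; exact he'_in)
    rw [SimpleGraph.Walk.edges_append, List.mem_append] at hmem
    rcases hmem with h | h
    · exact h
    · exact absurd h hqe'
  have hqp_eq : ((p'.append q2).toPath : T.Walk p₀ v) = p :=
    congrArg Subtype.val (hpu (p'.append q2).toPath pP)
  have he_in_p' : s(u,v) ∈ p'.edges := by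
    have hmem : s(u,v) ∈ (p'.append q2).edges :=
      SimpleGraph.Walk.edges_toPath_subset (p'.append q2) (by rw [hqp_eq]; exact he_in)
    rw [SimpleGraph.Walk.edges_append, List.mem_append] at hmem
    rcases hmem with h | h
    · exact h
    · exfalso
      apply hqe
      rw [hq2q, SimpleGraph.Walk.edges_reverse, List.mem_reverse] at h
      exact h
  -- split p at v'
  have hv'p : v' ∈ p.support := SimpleGraph.Walk.snd_mem_support_of_mem_edges p he'_in_p
  have hvp' : v ∈ p'.support := SimpleGraph.Walk.snd_mem_support_of_mem_edges p' he_in_p'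
  have htake : p.takeUntil v' hv'p = p' := by
    have := hpu ⟨p.takeUntil v' hv'p, hp.takeUntil hv'p⟩ pP'
    exact congrArg Subtype.val this
  have htake' : p'.takeUntil v hvp' = p := by
    have := hpu ⟨p'.takeUntil v hvp', hp'.takeUntil hvp'⟩ pP
    exact congrArg Subtype.val this
  have hlen : p.length = (p.takeUntil v' hv'p).length + (p.dropUntil v' hv'p).length := by
    conv_lhs => rw [← SimpleGraph.Walk.take_spec p hv'p]
    rw [SimpleGraph.Walk.length_append]
  have hlen' : p'.length = (p'.takeUntil v hvp').length + (p'.dropUntil v hvp').length := by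
    conv_lhs => rw [← SimpleGraph.Walk.take_spec p' hvp']
    rw [SimpleGraph.Walk.length_append]
  rw [htake] at hlen
  rw [htake'] at hlen'
  have hdrop0 : (p.dropUntil v' hv'p).length = 0 := by omega
  have hvv' : v' = v := walk_eq_endpoints _ hdrop0
  subst hvv'
  exact endpoint_edge hp he_in he'_in_p (Sym2.mem_mk_right u v') (Sym2.mem_mk_right u' v')

end FarEq
end TreeStuff

end Aux

theorem stmt1 (P S : Finset Pt) (hPS : Disjoint P S) (k : ℕ) (r : ℝ) (hr : 0 < r)
    (h : ∃ S' : Finset Pt, S' ⊆ S ∧ S'.card ≤ k ∧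
      ∃ T₀ : SimpleGraph ↥(P ∪ S'), T₀.IsTree ∧
        ∀ x y : ↥(P ∪ S'), T₀.Adj x y → dist (x : Pt) (y : Pt) ≤ r)
    (T : SimpleGraph ↥P) (hT : T.IsTree)
    (hmin : ∀ T'' : SimpleGraph ↥P, T''.IsTree →
      ∑ e ∈ T.edgeSet.toFinite.toFinset, ewgt P S r (e.map Subtype.val) ≤
      ∑ e ∈ T''.edgeSet.toFinite.toFinset, ewgt P S r (e.map Subtype.val)) :
    ∑ e ∈ T.edgeSet.toFinite.toFinset,
      (ewgt P S r (e.map Subtype.val)).toNat / 2 ≤ k := by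
  classical
  obtain ⟨S', hS'S, hS'card, T₀, hT₀, hT₀d⟩ := h
  have hPS' : Disjoint P S' := Finset.disjoint_of_subset_right hS'S hPS
  -- reachability within the restricted unit-disk graph
  have hreach : ∀ x y : Pt, x ∈ P ∪ S' → y ∈ P ∪ S' → (stGraph P S' r).Reachable x y := by
    intro x y hx hy
    exact SimpleGraph.Reachable.map
      (⟨Subtype.val, fun {a b} hab =>
        ⟨Subtype.coe_injective.ne hab.ne, a.2, b.2, hT₀d a b hab⟩⟩ : T₀ →g stGraph P S' r)
      (hT₀.isConnected.preconnected ⟨x, hx⟩ ⟨y, hy⟩)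
  have hwfin : ∀ x y : Pt, x ∈ P ∪ S' → y ∈ P ∪ S' → wgt P S' r x y ≠ ⊤ := by
    intro x y hx hy
    obtain ⟨wk⟩ := hreach x y hx hy
    exact ne_top_of_le_ne_top (WithTop.natCast_ne_top _) (Aux.wgt_le_cnt_walk wk)
  set W : Sym2 ↥P → ℕ∞ := fun e => ewgt P S r (e.map Subtype.val) with hW
  have hWpair : ∀ a b : ↥P, W s(a,b) ≤ wgt P S' r a.val b.val := by
    intro a b
    have h1 : W s(a,b) = min (wgt P S r a.val b.val) (wgt P S r b.val a.val) := by
      simp [hW, ewgt]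
    rw [h1]
    exact (min_le_left _ _).trans
      (Aux.wgt_mono hPS hS'S (Finset.mem_union_left _ a.2))
  have hWfin : ∀ e : Sym2 ↥P, W e ≠ ⊤ := by
    intro e
    induction e with
    | _ a b =>
      exact ne_top_of_le_ne_top
        (hwfin _ _ (Finset.mem_union_left _ a.2) (Finset.mem_union_left _ b.2)) (hWpair a b)
  have hp₀ : Nonempty ↥P := hT.isConnected.nonempty
  set p₀ : ↥P := hp₀.some with hp₀def
  set E := T.edgeSet.toFinite.toFinset with hE
  -- the far endpoint of each tree edge
  have hQ : ∀ e ∈ E, ∃ v : ↥P, (∃ u : ↥P, e = s(u,v) ∧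
      (T \ SimpleGraph.fromEdgeSet {e}).Reachable p₀ u) ∧
      ¬(T \ SimpleGraph.fromEdgeSet {e}).Reachable p₀ v := by
    intro e
    induction e using Sym2.ind with
    | _ x y =>
      intro he
      have heS : s(x,y) ∈ T.edgeSet := by
        rw [hE] at he
        exact (Set.Finite.mem_toFinset _).mp he
      have hadj : T.Adj x y := heS
      have hbridge := (SimpleGraph.isAcyclic_iff_forall_adj_isBridge.mp hT.IsAcyclic) hadj
      have hnr : ¬(T \ SimpleGraph.fromEdgeSet {s(x,y)}).Reachable x y :=
        (SimpleGraph.isBridge_iff.mp hbridge)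
      obtain ⟨w⟩ := hT.isConnected.preconnected p₀ x
      rcases Aux.reach_endpoint (v := y) p₀ w with hrx | hry
      · exact ⟨y, ⟨x, rfl, hrx⟩, fun hc => hnr (hrx.symm.trans hc)⟩
      · exact ⟨x, ⟨y, Sym2.eq_swap, hry⟩, fun hc => hnr (hc.symm.trans hry)⟩
  set vf : Sym2 ↥P → ↥P := fun e =>
    if hh : ∃ v : ↥P, (∃ u : ↥P, e = s(u,v) ∧
        (T \ SimpleGraph.fromEdgeSet {e}).Reachable p₀ u) ∧
        ¬(T \ SimpleGraph.fromEdgeSet {e}).Reachable p₀ v then hh.choose else p₀ with hvfdef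
  have hvf : ∀ e ∈ E, (∃ u : ↥P, e = s(u, vf e) ∧
      (T \ SimpleGraph.fromEdgeSet {e}).Reachable p₀ u) ∧
      ¬(T \ SimpleGraph.fromEdgeSet {e}).Reachable p₀ (vf e) := by
    intro e he
    have hh := hQ e he
    simp only [hvfdef, dif_pos hh]
    exact hh.choose_spec
  -- any pair with small S'-weight is on the same side of a heavy cut
  have hcut : ∀ u v a b : ↥P, T.Adj u v →
      ¬(T \ SimpleGraph.fromEdgeSet {s(u,v)}).Reachable a b → W s(u,v) ≤ W s(a, b) := by
    intro u v a b huv hnr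
    by_cases hab : a = b
    · exact absurd (hab ▸ SimpleGraph.Reachable.refl a) hnr
    exact Aux.cut_min hT hmin (fun e => hWfin e) huv hab hnr
  have hside : ∀ e ∈ E, ∀ (j : ℕ), 1 ≤ j → ((2*j : ℕ) : ℕ∞) ≤ W e →
      ∀ x : ↥P, Aux.Rel P S' r (2*j-1) (vf e) x →
        (T \ SimpleGraph.fromEdgeSet {e}).Reachable (vf e) x := by
    intro e he j hj hWe x hrel
    obtain ⟨u, hue, hru⟩ := (hvf e he).1
    have hadj : T.Adj u (vf e) := by
      have heS : e ∈ T.edgeSet := by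
        rw [hE] at he
        exact (Set.Finite.mem_toFinset _).mp he
      rw [hue] at heS
      exact heS
    induction hrel with
    | refl => exact SimpleGraph.Reachable.refl _
    | @tail b c hbc hstep ih =>
      refine ih.trans ?_
      by_contra hnr
      rw [hue] at hnr
      have h1 : W s(u, vf e) ≤ W s(b, c) := hcut u (vf e) b c hadj hnr
      rw [← hue] at h1
      have h2 : W s(b, c) ≤ wgt P S' r b.val c.val := hWpair b c
      have h3 : W e ≤ ((2*j-1 : ℕ) : ℕ∞) := le_trans (le_trans h1 h2) hstep
      have h4 : ((2*j : ℕ) : ℕ∞) ≤ ((2*j-1 : ℕ) : ℕ∞) := hWe.trans h3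
      have h5 : (2*j : ℕ) ≤ 2*j-1 := by exact_mod_cast h4
      omega
  have hnotrel : ∀ e ∈ E, ∀ (j : ℕ), 1 ≤ j → ((2*j : ℕ) : ℕ∞) ≤ W e →
      ¬ Aux.Rel P S' r (2*j-1) (vf e) p₀ := by
    intro e he j hj hWe hrel
    exact (hvf e he).2 ((hside e he j hj hWe p₀ hrel).symm)
  -- ring existence
  have hring : ∀ e ∈ E, ∀ (j : ℕ), 1 ≤ j → ((2*j : ℕ) : ℕ∞) ≤ W e →
      ∃ s ∈ S', Aux.FD P S' r (2*j-1) (vf e) s = (j : ℕ∞) := by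
    intro e he j hj hWe
    have hvfP : (vf e).val ∉ S' := Finset.disjoint_left.mp hPS' (vf e).2
    have hp₀P : (p₀ : Pt) ∉ S' := Finset.disjoint_left.mp hPS' p₀.2
    obtain ⟨wk⟩ := hreach (vf e).val p₀.val (Finset.mem_union_left _ (vf e).2)
      (Finset.mem_union_left _ p₀.2)
    have hcast : ((2*j-1 : ℕ) : ℕ∞) + 1 = ((2*j : ℕ) : ℕ∞) := by
      exact_mod_cast (by omega : (2*j-1)+1 = 2*j)
    refine Aux.ivt wk ?_ ?_
    · have hbig := Aux.FD_big (hnotrel e he j hj hWe)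
      calc ((j : ℕ∞) + 1) ≤ ((2*j : ℕ) : ℕ∞) := by exact_mod_cast (by omega : j+1 ≤ 2*j)
        _ = ((2*j-1 : ℕ) : ℕ∞) + 1 := hcast.symm
        _ ≤ Aux.FD P S' r (2*j-1) (vf e) p₀.val := hbig
        _ ≤ _ := le_self_add
    · rw [Aux.FD_self hPS', if_neg hvfP, zero_add]
      exact_mod_cast hj
  -- the injection into S'
  set f : (Σ _ : Sym2 ↥P, ℕ) → Pt := fun x =>
    if hh : ∃ s ∈ S', Aux.FD P S' r (2*x.2-1) (vf x.1) s = (x.2 : ℕ∞) then hh.choose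
    else p₀.val with hfdef
  have hf : ∀ e ∈ E, ∀ (j : ℕ), 1 ≤ j → ((2*j : ℕ) : ℕ∞) ≤ W e →
      f ⟨e, j⟩ ∈ S' ∧ Aux.FD P S' r (2*j-1) (vf e) (f ⟨e, j⟩) = (j : ℕ∞) := by
    intro e he j hj hWe
    have hh := hring e he j hj hWe
    simp only [hfdef, dif_pos hh]
    exact ⟨hh.choose_spec.1, hh.choose_spec.2⟩
  -- set up the counting
  set Φ : Finset (Σ _ : Sym2 ↥P, ℕ) := E.sigma (fun e => Finset.Icc 1 ((W e).toNat / 2)) with hΦ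
  have hcond : ∀ x ∈ Φ, x.1 ∈ E ∧ 1 ≤ x.2 ∧ ((2*x.2 : ℕ) : ℕ∞) ≤ W x.1 := by
    intro x hx
    rw [hΦ, Finset.mem_sigma] at hx
    obtain ⟨he, hj⟩ := hx
    rw [Finset.mem_Icc] at hj
    refine ⟨he, hj.1, ?_⟩
    have h2 : 2 * x.2 ≤ (W x.1).toNat := by
      have := hj.2
      omega
    calc ((2*x.2 : ℕ) : ℕ∞) ≤ ((W x.1).toNat : ℕ∞) := by exact_mod_cast h2
      _ = W x.1 := ENat.coe_toNat (hWfin x.1)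
  -- cross-level injectivity
  have hcross : ∀ e ∈ E, ∀ e' ∈ E, ∀ j j' : ℕ, 1 ≤ j → 1 ≤ j' →
      ((2*j : ℕ) : ℕ∞) ≤ W e → ((2*j' : ℕ) : ℕ∞) ≤ W e' → ∀ s : Pt, s ∈ S' →
      Aux.FD P S' r (2*j-1) (vf e) s = (j : ℕ∞) →
      Aux.FD P S' r (2*j'-1) (vf e') s = (j' : ℕ∞) → j < j' → False := by
    intro e he e' he' j j' hj hj' hWe hWe' s hsS' hF hF' hlt
    have hFne : Aux.FD P S' r (2*j-1) (vf e) s ≠ ⊤ := by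
      rw [hF]; exact WithTop.natCast_ne_top j
    have hF'ne : Aux.FD P S' r (2*j'-1) (vf e') s ≠ ⊤ := by
      rw [hF']; exact WithTop.natCast_ne_top j'
    obtain ⟨x, hxrel, hxw⟩ := Aux.FD_exists hFne
    obtain ⟨y, hyrel, hyw⟩ := Aux.FD_exists hF'ne
    have htri := Aux.wgt_triangle (P := P) (r := r) hsS' (x := x.val) (z := y.val)
    rw [Aux.wgt_comm (P := P) (S₀ := S') (r := r) s y.val] at htri
    rw [hxw, hF, hyw, hF'] at htri
    have hsum : ((j : ℕ∞) + (j' : ℕ∞)) ≤ ((2*j'-1 : ℕ) : ℕ∞) + 1 := by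
      have : ((j + j' : ℕ) : ℕ∞) ≤ ((2*j'-1+1 : ℕ) : ℕ∞) := by
        exact_mod_cast (by omega : j + j' ≤ 2*j'-1+1)
      push_cast at this ⊢
      convert this using 2 <;> norm_cast
    have hle : wgt P S' r x.val y.val ≤ ((2*j'-1 : ℕ) : ℕ∞) := by
      have h1 : wgt P S' r x.val y.val + 1 ≤ ((2*j'-1 : ℕ) : ℕ∞) + 1 := htri.trans hsum
      exact (ENat.add_le_add_iff_right (by simp)).mp h1
    have hstep : Aux.Rel P S' r (2*j'-1) x y := Relation.ReflTransGen.single hle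
    have hrel2 : Aux.Rel P S' r (2*j'-1) (vf e') x := hyrel.trans hstep.symm
    have hcontra : Aux.FD P S' r (2*j'-1) (vf e') s ≤ (j : ℕ∞) := by
      have := Aux.FD_le (y := s) hrel2
      rwa [hxw, hF] at this
    rw [hF'] at hcontra
    have : j' ≤ j := by exact_mod_cast hcontra
    omega
  -- same-level injectivity
  have hsame : ∀ e ∈ E, ∀ e' ∈ E, ∀ j : ℕ, 1 ≤ j →
      ((2*j : ℕ) : ℕ∞) ≤ W e → ((2*j : ℕ) : ℕ∞) ≤ W e' → ∀ s : Pt, s ∈ S' →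
      Aux.FD P S' r (2*j-1) (vf e) s = (j : ℕ∞) →
      Aux.FD P S' r (2*j-1) (vf e') s = (j : ℕ∞) → e = e' := by
    intro e he e' he' j hj hWe hWe' s hsS' hF hF'
    have hFne : Aux.FD P S' r (2*j-1) (vf e) s ≠ ⊤ := by
      rw [hF]; exact WithTop.natCast_ne_top j
    have hF'ne : Aux.FD P S' r (2*j-1) (vf e') s ≠ ⊤ := by
      rw [hF']; exact WithTop.natCast_ne_top j
    obtain ⟨x, hxrel, hxw⟩ := Aux.FD_exists hFne
    obtain ⟨y, hyrel, hyw⟩ := Aux.FD_exists hF'ne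
    have htri := Aux.wgt_triangle (P := P) (r := r) hsS' (x := x.val) (z := y.val)
    rw [Aux.wgt_comm (P := P) (S₀ := S') (r := r) s y.val] at htri
    rw [hxw, hF, hyw, hF'] at htri
    have hsum : ((j : ℕ∞) + (j : ℕ∞)) ≤ ((2*j-1 : ℕ) : ℕ∞) + 1 := by
      have : ((j + j : ℕ) : ℕ∞) ≤ ((2*j-1+1 : ℕ) : ℕ∞) := by
        exact_mod_cast (by omega : j + j ≤ 2*j-1+1)
      push_cast at this ⊢
      convert this using 2 <;> norm_cast
    have hle : wgt P S' r x.val y.val ≤ ((2*j-1 : ℕ) : ℕ∞) := by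
      have h1 : wgt P S' r x.val y.val + 1 ≤ ((2*j-1 : ℕ) : ℕ∞) + 1 := htri.trans hsum
      exact (ENat.add_le_add_iff_right (by simp)).mp h1
    have hstep : Aux.Rel P S' r (2*j-1) x y := Relation.ReflTransGen.single hle
    have hrel : Aux.Rel P S' r (2*j-1) (vf e) (vf e') :=
      (hxrel.trans hstep).trans hyrel.symm
    have h1 : (T \ SimpleGraph.fromEdgeSet {e}).Reachable (vf e) (vf e') :=
      hside e he j hj hWe (vf e') hrel
    have h2 : (T \ SimpleGraph.fromEdgeSet {e'}).Reachable (vf e') (vf e) :=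
      hside e' he' j hj hWe' (vf e) hrel.symm
    obtain ⟨u, hue, hru⟩ := (hvf e he).1
    obtain ⟨u', hue', hru'⟩ := (hvf e' he').1
    have hnv := (hvf e he).2
    have hnv' := (hvf e' he').2
    set ve := vf e with hve
    set ve' := vf e' with hve'
    have hadj : T.Adj u (vf e) := by
      have heS : e ∈ T.edgeSet := by
        rw [hE] at he
        exact (Set.Finite.mem_toFinset _).mp he
      rw [hue] at heS
      exact heS
    have hadj' : T.Adj u' (vf e') := by
      have heS : e' ∈ T.edgeSet := by
        rw [hE] at he'
        exact (Set.Finite.mem_toFinset _).mp he'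
      rw [hue'] at heS
      exact heS
    rw [hue] at hnv h1
    rw [hue'] at hnv' h2
    rw [hue, hue']
    exact Aux.far_eq hT p₀ hadj hadj' hnv hnv' h1 h2
  -- injectivity
  have hinj : Set.InjOn f Φ := by
    intro x hx y hy hxy
    obtain ⟨hxE, hxj, hxW⟩ := hcond x (by exact_mod_cast hx)
    obtain ⟨hyE, hyj, hyW⟩ := hcond y (by exact_mod_cast hy)
    obtain ⟨hxS, hxF⟩ := hf x.1 hxE x.2 hxj hxW
    obtain ⟨hyS, hyF⟩ := hf y.1 hyE y.2 hyj hyW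
    have hxy' : f ⟨x.1, x.2⟩ = f ⟨y.1, y.2⟩ := by
      show f x = f y
      exact hxy
    rw [hxy'] at hxF hxS
    have hj2 : x.2 = y.2 := by
      by_contra hne
      rcases Nat.lt_or_ge x.2 y.2 with hlt | hge
      · exact hcross x.1 hxE y.1 hyE x.2 y.2 hxj hyj hxW hyW (f ⟨y.1, y.2⟩) hyS hxF hyF hlt
      · have hlt : y.2 < x.2 := by omega
        exact hcross y.1 hyE x.1 hxE y.2 x.2 hyj hxj hyW hxW (f ⟨y.1, y.2⟩) hyS hyF hxF hlt
    have he1 : x.1 = y.1 := by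
      apply hsame x.1 hxE y.1 hyE x.2 hxj hxW (by rw [hj2]; exact hyW) (f ⟨y.1, y.2⟩) hyS hxF
      rw [hj2]
      exact hyF
    exact Sigma.ext he1 (heq_of_eq hj2)
  have hmaps : ∀ x ∈ Φ, f x ∈ S' := by
    intro x hx
    obtain ⟨he, hj, hWe⟩ := hcond x hx
    exact (hf x.1 he x.2 hj hWe).1
  have hcard : Φ.card ≤ S'.card := by
    classical
    exact Finset.card_le_card_of_injOn f hmaps hinj
  have hsum : ∑ e ∈ E, (W e).toNat / 2 = Φ.card := by
    rw [hΦ, Finset.card_sigma]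
    congr 1
    ext e
    rw [Nat.card_Icc]
    omega
  calc ∑ e ∈ E, (W e).toNat / 2 = Φ.card := hsum
    _ ≤ S'.card := hcard
    _ ≤ k := hS'card
end
end

section
/- Let P and S be disjoint finite sets of points in the Euclidean plane, let k be a natural number, and let r > 0. Suppose there exists a tree T' with vertex set P such that every edge {p,q} of T' satisfies w_r(p,q) < ∞ and the sum over the edges {p,q} of T' of ⌊w_r(p,q)/2⌋ is at most k. Then there exist a subset S' ⊆ S with |S'| ≤ k and a tree whose vertex set is P ∪ S' all of whose edges (straight segments between its vertices) have Euclidean length at most 2r. -/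
open scoped ENNReal

noncomputable section

lemma exists_tree_aux {V : Type} [Fintype V] :
    ∀ (n : ℕ) (G : SimpleGraph V), G.edgeSet.toFinite.toFinset.card ≤ n → G.Connected →
      ∃ T : SimpleGraph V, T ≤ G ∧ T.IsTree := by
  classical
  intro n
  induction n with
  | zero =>
    intro G hcard hG
    by_cases hac : G.IsAcyclic
    · exact ⟨G, le_refl _, ⟨hG, hac⟩⟩
    · rw [SimpleGraph.isAcyclic_iff_forall_adj_isBridge] at hac
      push_neg at hac
      obtain ⟨v, w, hvw, -⟩ := hac
      have : s(v, w) ∈ G.edgeSet.toFinite.toFinset := by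
        rw [Set.Finite.mem_toFinset]; exact G.mem_edgeSet.mpr hvw
      have := Finset.card_pos.mpr ⟨_, this⟩
      omega
  | succ n ih =>
    intro G hcard hG
    by_cases hac : G.IsAcyclic
    · exact ⟨G, le_refl _, ⟨hG, hac⟩⟩
    · rw [SimpleGraph.isAcyclic_iff_forall_adj_isBridge] at hac
      push_neg at hac
      obtain ⟨v, w, hvw, hnb⟩ := hac
      set G' := G \ SimpleGraph.fromEdgeSet {s(v, w)} with hG'def
      have hle : G' ≤ G := sdiff_le
      have hreachvw : G'.Reachable v w := by
        rw [SimpleGraph.isBridge_iff] at hnb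
        push_neg at hnb
        exact hnb
      -- every edge of G transfers to reachability in G'
      have htrans : ∀ a c : V, G.Adj a c → G'.Reachable a c := by
        intro a c hac'
        by_cases he : s(a, c) = s(v, w)
        · rw [Sym2.eq_iff] at he
          rcases he with ⟨rfl, rfl⟩ | ⟨rfl, rfl⟩
          · exact hreachvw
          · exact hreachvw.symm
        · refine SimpleGraph.Adj.reachable ?_
          refine ⟨hac', ?_⟩
          simp only [SimpleGraph.fromEdgeSet_adj, Set.mem_singleton_iff]
          tauto
      have hG'conn : G'.Connected := by
        have hpre : G'.Preconnected := by
          intro x y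
          obtain ⟨p⟩ := hG.preconnected x y
          induction p with
          | nil => exact SimpleGraph.Reachable.refl _
          | cons h q ihq => exact (htrans _ _ h).trans ihq
        haveI := hG.nonempty
        exact SimpleGraph.Connected.mk hpre
      have hssub : G'.edgeSet.toFinite.toFinset ⊂ G.edgeSet.toFinite.toFinset := by
        constructor
        · intro e he
          simp only [Set.Finite.mem_toFinset] at he ⊢
          exact SimpleGraph.edgeSet_mono hle he
        · intro hsub
          have h1 : s(v, w) ∈ G.edgeSet.toFinite.toFinset := by
            rw [Set.Finite.mem_toFinset]; exact G.mem_edgeSet.mpr hvw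
          have h2 := hsub h1
          simp only [Set.Finite.mem_toFinset, SimpleGraph.mem_edgeSet] at h2
          exact h2.2 (by simp [hvw.ne])
      have hcard' : G'.edgeSet.toFinite.toFinset.card ≤ n := by
        have := Finset.card_lt_card hssub
        omega
      obtain ⟨T, hT1, hT2⟩ := ih G' hcard' hG'conn
      exact ⟨T, hT1.trans hle, hT2⟩

lemma exists_tree {V : Type} [Fintype V] {G : SimpleGraph V} (hG : G.Connected) :
    ∃ T : SimpleGraph V, T ≤ G ∧ T.IsTree :=
  exists_tree_aux _ G le_rfl hG

lemma stGraph_mono {V1 V2 : Finset Pt} (h : V1 ⊆ V2) (ρ : ℝ) :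
    stGraph V1 ∅ ρ ≤ stGraph V2 ∅ ρ := by
  rintro x y ⟨h1, h2, h3, h4⟩
  simp only [Finset.union_empty] at h2 h3
  exact ⟨h1, by simp only [Finset.union_empty]; exact h h2,
    by simp only [Finset.union_empty]; exact h h3, h4⟩

lemma wgt_comm (P S : Finset Pt) (r : ℝ) (p q : Pt) : wgt P S r p q = wgt P S r q p := by
  unfold wgt
  congr 1
  ext n
  constructor
  · rintro ⟨wk, hp, rfl⟩
    exact ⟨wk.reverse, hp.reverse, by
      rw [SimpleGraph.Walk.support_reverse, List.filter_reverse, List.length_reverse]⟩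
  · rintro ⟨wk, hp, rfl⟩
    exact ⟨wk.reverse, hp.reverse, by
      rw [SimpleGraph.Walk.support_reverse, List.filter_reverse, List.length_reverse]⟩

lemma key (P S : Finset Pt) (hPS : Disjoint P S) (r : ℝ) (hr : 0 < r) :
    ∀ (n : ℕ) (a b : Pt) (w : (stGraph P S r).Walk a b), w.length ≤ n → b ∈ P →
    ∃ A : Finset Pt, A ⊆ S ∧
      A.card ≤ (w.support.tail.filter (fun x => decide (x ∈ S))).length / 2 ∧
      (stGraph (insert a (P ∪ A)) ∅ (2*r)).Reachable a b ∧
      ∀ s ∈ A, (stGraph (insert a (P ∪ A)) ∅ (2*r)).Reachable s b := by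
  intro n
  induction n with
  | zero =>
    intro a b w hlen hb
    cases w with
    | nil => exact ⟨∅, by simp, by simp, SimpleGraph.Reachable.refl _, by simp⟩
    | cons h w' => simp [SimpleGraph.Walk.length_cons] at hlen
  | succ n ihn =>
    intro a b w hlen hb
    cases w with
    | nil => exact ⟨∅, by simp, by simp, SimpleGraph.Reachable.refl _, by simp⟩
    | @cons _ x _ h w' =>
      have hax := h.1
      have hxPS := h.2.2.1
      have hdax := h.2.2.2
      have hlen' : w'.length ≤ n := by
        simp only [SimpleGraph.Walk.length_cons] at hlen; omega
      have hsupp : (SimpleGraph.Walk.cons h w').support.tail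
          = w'.support := by simp
      rw [hsupp]
      by_cases hxP : x ∈ P
      · -- first step goes to a terminal
        obtain ⟨A, hAS, hcard, hreach, hall⟩ := ihn x b w' hlen' hb
        have hxS : x ∉ S := Finset.disjoint_left.mp hPS hxP
        have hsub : insert x (P ∪ A) ⊆ insert a (P ∪ A) := by
          intro y hy
          rcases Finset.mem_insert.mp hy with rfl | hy
          · exact Finset.mem_insert_of_mem (Finset.mem_union_left _ hxP)
          · exact Finset.mem_insert_of_mem hy
        have hmono := stGraph_mono hsub (2*r)
        have hadj : (stGraph (insert a (P ∪ A)) ∅ (2*r)).Adj a x := by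
          refine ⟨hax, ?_, ?_, by nlinarith [dist_nonneg (x := a) (y := x)]⟩
          · simp
          · simp [Finset.mem_insert_of_mem (Finset.mem_union_left _ hxP)]
        refine ⟨A, hAS, ?_, hadj.reachable.trans (hreach.mono hmono), fun s hs => (hall s hs).mono hmono⟩
        · rw [SimpleGraph.Walk.support_eq_cons w', List.filter_cons_of_neg (by simp [hxS])]
          exact hcard
      · -- first step goes to a Steiner point x
        have hxS : x ∈ S := by
          rcases Finset.mem_union.mp hxPS with h' | h'
          · exact absurd h' hxP
          · exact h'
        cases w' with
        | nil => exact absurd hb (fun hb' => (Finset.disjoint_left.mp hPS hb') hxS)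
        | @cons _ y _ h2 w'' =>
          have hxy := h2.1
          have hyPS := h2.2.2.1
          have hdxy := h2.2.2.2
          have hlen'' : w''.length ≤ n := by
            simp only [SimpleGraph.Walk.length_cons] at hlen hlen'; omega
          have hday : dist a y ≤ 2 * r :=
            le_trans (dist_triangle a x y) (by linarith)
          obtain ⟨A, hAS, hcard, hreach, hall⟩ := ihn y b w'' hlen'' hb
          -- counting
          have hsupp2 : (SimpleGraph.Walk.cons h2 w'').support
              = x :: w''.support := by simp
          have hcnt : ((x :: w''.support).filter (fun z => decide (z ∈ S))).length
              = 1 + (w''.support.filter (fun z => decide (z ∈ S))).length := by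
            rw [List.filter_cons_of_pos (by simp [hxS])]; simp [Nat.add_comm]
          by_cases hyP : y ∈ P
          · -- skip x entirely
            have hyS : y ∉ S := Finset.disjoint_left.mp hPS hyP
            have hsub : insert y (P ∪ A) ⊆ insert a (P ∪ A) := by
              intro z hz
              rcases Finset.mem_insert.mp hz with rfl | hz
              · exact Finset.mem_insert_of_mem (Finset.mem_union_left _ hyP)
              · exact Finset.mem_insert_of_mem hz
            have hmono := stGraph_mono hsub (2*r)
            have hry : (stGraph (insert a (P ∪ A)) ∅ (2*r)).Reachable a b := by
              by_cases hay : a = y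
              · subst hay; exact hreach.mono hmono
              · have hadj : (stGraph (insert a (P ∪ A)) ∅ (2*r)).Adj a y :=
                  ⟨hay, by simp, by simp [Finset.mem_insert_of_mem (Finset.mem_union_left _ hyP)], hday⟩
                exact hadj.reachable.trans (hreach.mono hmono)
            refine ⟨A, hAS, ?_, hry, fun s hs => (hall s hs).mono hmono⟩
            · have hcard' : A.card ≤ ((w''.support).filter (fun z => decide (z ∈ S))).length / 2 := by
                rw [SimpleGraph.Walk.support_eq_cons w'',
                  List.filter_cons_of_neg (by simp [hyS])]
                exact hcard
              rw [SimpleGraph.Walk.support_cons, hcnt]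
              omega
          · -- keep y
            have hyS : y ∈ S := by
              rcases Finset.mem_union.mp hyPS with h' | h'
              · exact absurd h' hyP
              · exact h'
            refine ⟨insert y A, Finset.insert_subset hyS hAS, ?_, ?_, ?_⟩
            · -- cardinality
              have hcnt2 : (w''.support.filter (fun z => decide (z ∈ S))).length
                  = 1 + (w''.support.tail.filter (fun z => decide (z ∈ S))).length := by
                rw [SimpleGraph.Walk.support_eq_cons w'',
                  List.filter_cons_of_pos (by simp [hyS])]; simp [Nat.add_comm]
              have := Finset.card_insert_le y A
              rw [SimpleGraph.Walk.support_cons, hcnt, hcnt2]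
              omega
            · -- reachability a to b
              have hsub : insert y (P ∪ A) ⊆ insert a (P ∪ insert y A) := by
                intro z hz
                rcases Finset.mem_insert.mp hz with rfl | hz
                · exact Finset.mem_insert_of_mem (Finset.mem_union_right _ (Finset.mem_insert_self _ _))
                · rcases Finset.mem_union.mp hz with h' | h'
                  · exact Finset.mem_insert_of_mem (Finset.mem_union_left _ h')
                  · exact Finset.mem_insert_of_mem (Finset.mem_union_right _ (Finset.mem_insert_of_mem h'))
              have hmono := stGraph_mono hsub (2*r)
              by_cases hay : a = y
              · subst hay; exact hreach.mono hmono
              · have hadj : (stGraph (insert a (P ∪ insert y A)) ∅ (2*r)).Adj a y :=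
                  ⟨hay, by simp, by
                    simp only [Finset.union_empty]
                    exact Finset.mem_insert_of_mem (Finset.mem_union_right _ (Finset.mem_insert_self _ _)), hday⟩
                exact hadj.reachable.trans (hreach.mono hmono)
            · -- all Steiner points reachable
              intro s hs
              have hsub : insert y (P ∪ A) ⊆ insert a (P ∪ insert y A) := by
                intro z hz
                rcases Finset.mem_insert.mp hz with rfl | hz
                · exact Finset.mem_insert_of_mem (Finset.mem_union_right _ (Finset.mem_insert_self _ _))
                · rcases Finset.mem_union.mp hz with h' | h'
                  · exact Finset.mem_insert_of_mem (Finset.mem_union_left _ h')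
                  · exact Finset.mem_insert_of_mem (Finset.mem_union_right _ (Finset.mem_insert_of_mem h'))
              have hmono := stGraph_mono hsub (2*r)
              rcases Finset.mem_insert.mp hs with rfl | hs
              · exact hreach.mono hmono
              · exact (hall s hs).mono hmono

lemma reach_comap {V : Finset Pt} {ρ : ℝ} {u v : Pt}
    (w : (stGraph V ∅ ρ).Walk u v) :
    ∀ (hu : u ∈ V) (hv : v ∈ V),
      ((stGraph V ∅ ρ).comap (Subtype.val : ↥V → Pt)).Reachable ⟨u, hu⟩ ⟨v, hv⟩ := by
  induction w with
  | nil => intro hu hv; exact SimpleGraph.Reachable.refl _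
  | @cons _ x _ h w ih =>
    intro hu hv
    have hx : x ∈ V := by
      have := h.2.2.1; simpa using this
    have hadj : ((stGraph V ∅ ρ).comap (Subtype.val : ↥V → Pt)).Adj ⟨_, hu⟩ ⟨x, hx⟩ := h
    exact hadj.reachable.trans (ih hx hv)

theorem stmt4 (P S : Finset Pt) (hPS : Disjoint P S) (k : ℕ) (r : ℝ) (hr : 0 < r)
    (h : ∃ T' : SimpleGraph ↥P, T'.IsTree ∧
      (∀ e ∈ T'.edgeSet, ewgt P S r (e.map Subtype.val) ≠ ⊤) ∧
      ∑ e ∈ T'.edgeSet.toFinite.toFinset,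
        (ewgt P S r (e.map Subtype.val)).toNat / 2 ≤ k) :
    ∃ S' : Finset Pt, S' ⊆ S ∧ S'.card ≤ k ∧
      ∃ T : SimpleGraph ↥(P ∪ S'), T.IsTree ∧
        ∀ x y : ↥(P ∪ S'), T.Adj x y → dist (x : Pt) (y : Pt) ≤ 2 * r := by
  classical
  obtain ⟨T', hTree, hfin, hsum⟩ := h
  set E := T'.edgeSet.toFinite.toFinset with hE
  have hQ : ∀ e ∈ E, ∃ A : Finset Pt, A ⊆ S ∧
      A.card ≤ (ewgt P S r (e.map Subtype.val)).toNat / 2 ∧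
      ∃ p q : ↥P, e = s(p, q) ∧
        (stGraph (P ∪ A) ∅ (2*r)).Reachable ↑p ↑q ∧
        ∀ s ∈ A, (stGraph (P ∪ A) ∅ (2*r)).Reachable s ↑q := by
    intro e he
    rw [hE, Set.Finite.mem_toFinset] at he
    revert he
    induction e using Sym2.ind with
    | _ vp vq =>
    intro he
    have hadj : T'.Adj vp vq := he
    have hmap : (Sym2.map Subtype.val s(vp, vq)) = s((vp : Pt), (vq : Pt)) := by
      simp
    have hewgt : ewgt P S r (s(vp, vq).map Subtype.val) = wgt P S r ↑vp ↑vq := by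
      rw [hmap]
      show Sym2.lift _ _ = _
      rw [Sym2.lift_mk]
      simp only [wgt_comm P S r (↑vq) (↑vp), min_self]
    have hne := hfin s(vp, vq) he
    rw [hewgt] at hne
    have hwgt : wgt P S r ↑vp ↑vq = sInf {n : ℕ∞ | ∃ wk : (stGraph P S r).Walk ↑vp ↑vq,
        wk.IsPath ∧ n = ((wk.support.filter (fun x => decide (x ∈ S))).length : ℕ∞)} := rfl
    have hSet : {n : ℕ∞ | ∃ wk : (stGraph P S r).Walk ↑vp ↑vq,
        wk.IsPath ∧ n = ((wk.support.filter (fun x => decide (x ∈ S))).length : ℕ∞)}.Nonempty := by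
      by_contra hcon
      rw [Set.not_nonempty_iff_eq_empty] at hcon
      apply hne
      rw [hwgt, hcon, sInf_empty]
    have hmem := csInf_mem hSet
    rw [← hwgt] at hmem
    obtain ⟨wk, hpath, hcount⟩ := hmem
    obtain ⟨A, hAS, hcard, hreach, hall⟩ :=
      key P S hPS r hr wk.length ↑vp ↑vq wk le_rfl vq.2
    have hins : insert (↑vp : Pt) (P ∪ A) = P ∪ A :=
      Finset.insert_eq_self.mpr (Finset.mem_union_left _ vp.2)
    rw [hins] at hreach hall
    refine ⟨A, hAS, ?_, vp, vq, rfl, hreach, hall⟩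
    have hvpS : (↑vp : Pt) ∉ S := Finset.disjoint_left.mp hPS vp.2
    have hhead : (wk.support.filter (fun x => decide (x ∈ S))).length
        = (wk.support.tail.filter (fun x => decide (x ∈ S))).length := by
      conv_lhs => rw [SimpleGraph.Walk.support_eq_cons wk]
      rw [List.filter_cons_of_neg (by simp [hvpS])]
    rw [hewgt, hcount, ENat.toNat_coe, hhead]
    exact hcard
  choose! F hF using hQ
  refine ⟨E.biUnion F, Finset.biUnion_subset.mpr fun e he => (hF e he).1, ?_, ?_⟩
  · calc (E.biUnion F).card ≤ ∑ e ∈ E, (F e).card := Finset.card_biUnion_le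
      _ ≤ ∑ e ∈ E, (ewgt P S r (e.map Subtype.val)).toNat / 2 :=
        Finset.sum_le_sum fun e he => (hF e he).2.1
      _ ≤ k := hsum
  · set S' := E.biUnion F with hS'
    obtain ⟨p0⟩ := hTree.isConnected.nonempty
    have hPsub : ∀ e ∈ E, P ∪ F e ⊆ P ∪ S' := fun e he =>
      Finset.union_subset_union_right (Finset.subset_biUnion_of_mem F he)
    have reachP : ∀ p q : ↥P, (stGraph (P ∪ S') ∅ (2*r)).Reachable ↑p ↑q := by
      intro p q
      obtain ⟨wkt⟩ := hTree.isConnected.preconnected p q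
      induction wkt with
      | nil => exact SimpleGraph.Reachable.refl _
      | @cons p u q hadj w ih =>
        have he : s(p, u) ∈ E := by
          rw [hE, Set.Finite.mem_toFinset]
          exact hadj
        obtain ⟨-, -, p', q', heq, hre, -⟩ := hF s(p, u) he
        have hre' : (stGraph (P ∪ S') ∅ (2*r)).Reachable ↑p' ↑q' :=
          hre.mono (stGraph_mono (hPsub _ he) _)
        have hpu : (stGraph (P ∪ S') ∅ (2*r)).Reachable ↑p ↑u := by
          rw [Sym2.eq_iff] at heq
          rcases heq with ⟨rfl, rfl⟩ | ⟨rfl, rfl⟩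
          · exact hre'
          · exact hre'.symm
        exact hpu.trans ih
    have reachS : ∀ s ∈ S', ∃ t : ↥P, (stGraph (P ∪ S') ∅ (2*r)).Reachable s ↑t := by
      intro s hs
      rw [hS', Finset.mem_biUnion] at hs
      obtain ⟨e, he, hse⟩ := hs
      obtain ⟨-, -, p', q', heq, -, hall⟩ := hF e he
      exact ⟨q', (hall s hse).mono (stGraph_mono (hPsub _ he) _)⟩
    have reachAny : ∀ x ∈ P ∪ S', ∃ t : ↥P, (stGraph (P ∪ S') ∅ (2*r)).Reachable x ↑t := by
      intro x hx
      rcases Finset.mem_union.mp hx with hx | hx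
      · exact ⟨⟨x, hx⟩, SimpleGraph.Reachable.refl _⟩
      · exact reachS x hx
    have hconn : ((stGraph (P ∪ S') ∅ (2*r)).comap
        (Subtype.val : ↥(P ∪ S') → Pt)).Connected := by
      haveI : Nonempty ↥(P ∪ S') := ⟨⟨↑p0, Finset.mem_union_left _ p0.2⟩⟩
      apply SimpleGraph.Connected.mk
      rintro ⟨x, hx⟩ ⟨y, hy⟩
      obtain ⟨tx, hrx⟩ := reachAny x hx
      obtain ⟨ty, hry⟩ := reachAny y hy
      have : (stGraph (P ∪ S') ∅ (2*r)).Reachable x y :=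
        (hrx.trans (reachP tx ty)).trans hry.symm
      obtain ⟨w⟩ := this
      exact reach_comap w hx hy
    obtain ⟨T, hTle, hTtree⟩ := exists_tree hconn
    refine ⟨T, hTtree, ?_⟩
    intro x y hxy
    exact (hTle hxy).2.2.2
end
end

section
/- Let G be a finite connected simple graph with edge weights w : E(G) → ℝ, and let T be a spanning tree of G minimizing the total weight ∑_{e ∈ E(T)} w(e) among all spanning trees of G. Then for every nondecreasing function f : ℝ → ℝ and every spanning tree T' of G, one has ∑_{e ∈ E(T)} f(w(e)) ≤ ∑_{e ∈ E(T')} f(w(e)). -/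
open SimpleGraph

section Aux

variable {V : Type*}

private lemma reach_del {G : SimpleGraph V} (a b : V) :
    ∀ {u v : V}, G.Walk u v →
      (G.deleteEdges {s(a,b)}).Reachable u v ∨
      ((G.deleteEdges {s(a,b)}).Reachable u a ∧ (G.deleteEdges {s(a,b)}).Reachable b v) ∨
      ((G.deleteEdges {s(a,b)}).Reachable u b ∧ (G.deleteEdges {s(a,b)}).Reachable a v) := by
  intro u v p
  induction p with
  | nil => exact Or.inl (Reachable.refl _)
  | @cons u x v h q ih =>
    by_cases he : s(u, x) = s(a, b)
    · rw [Sym2.eq_iff] at he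
      rcases he with ⟨rfl, rfl⟩ | ⟨rfl, rfl⟩
      · rcases ih with h1 | ⟨h1, h2⟩ | ⟨h1, h2⟩
        · exact Or.inr (Or.inl ⟨Reachable.refl _, h1⟩)
        · exact Or.inr (Or.inl ⟨Reachable.refl _, h2⟩)
        · exact Or.inl h2
      · rcases ih with h1 | ⟨h1, h2⟩ | ⟨h1, h2⟩
        · exact Or.inr (Or.inr ⟨Reachable.refl _, h1⟩)
        · exact Or.inl h2
        · exact Or.inr (Or.inr ⟨Reachable.refl _, h2⟩)
    · have hd : (G.deleteEdges {s(a,b)}).Adj u x := by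
        rw [deleteEdges_adj]
        exact ⟨h, by simpa using he⟩
      have hr := hd.reachable
      rcases ih with h1 | ⟨h1, h2⟩ | ⟨h1, h2⟩
      · exact Or.inl (hr.trans h1)
      · exact Or.inr (Or.inl ⟨hr.trans h1, h2⟩)
      · exact Or.inr (Or.inr ⟨hr.trans h1, h2⟩)

private lemma cross_edge {H : SimpleGraph V} {S : Set V} :
    ∀ {u v : V} (p : H.Walk u v), u ∈ S → v ∉ S →
      ∃ x y, H.Adj x y ∧ x ∈ S ∧ y ∉ S ∧ s(x,y) ∈ p.edges := by
  classical
  intro u v p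
  induction p with
  | nil => intro h h'; exact absurd h h'
  | @cons u x v h q ih =>
    intro hu hv
    by_cases hx : x ∈ S
    · obtain ⟨x', y', h1, h2, h3, h4⟩ := ih hx hv
      exact ⟨x', y', h1, h2, h3, by simp [Walk.edges_cons, h4]⟩
    · exact ⟨u, x, h, hu, hx, by simp [Walk.edges_cons]⟩

/-- Swapping one edge for another reconnecting edge in a tree yields a tree. -/
private lemma swap_tree {H : SimpleGraph V} (hH : H.IsTree)
    {a b x y : V} (hab : H.Adj a b) (hxy : x ≠ y)
    (hsep : ¬ (H.deleteEdges {s(a,b)}).Reachable x y) :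
    ((H.deleteEdges {s(a,b)}) ⊔ edge x y).IsTree := by
  classical
  set Hd := H.deleteEdges {s(a,b)} with hHd
  set K := Hd ⊔ edge x y with hK
  have hdle : Hd ≤ K := le_sup_left
  have hKadj : K.Adj x y := by
    have h1 : (edge x y).Adj x y := by
      rw [edge_adj]
      exact ⟨Or.inl ⟨rfl, rfl⟩, hxy⟩
    exact (le_sup_right : edge x y ≤ K) h1
  have dich : ∀ v, Hd.Reachable a v ∨ Hd.Reachable b v := by
    intro v
    obtain ⟨p⟩ := hH.isConnected.preconnected a v
    rcases reach_del a b p with h1 | ⟨h1, h2⟩ | ⟨h1, h2⟩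
    · exact Or.inl h1
    · exact Or.inr h2
    · exact Or.inl h2
  have hxyK : K.Reachable x y := hKadj.reachable
  have hab' : K.Reachable a b := by
    rcases dich x with hx | hx <;> rcases dich y with hy | hy
    · exact absurd (hx.symm.trans hy) hsep
    · exact (hx.mono hdle).trans (hxyK.trans (hy.mono hdle).symm)
    · exact (hy.mono hdle).trans (hxyK.symm.trans (hx.mono hdle).symm)
    · exact absurd (hx.symm.trans hy) hsep
  have hreach : ∀ v, K.Reachable a v := by
    intro v
    rcases dich v with h | h
    · exact h.mono hdle
    · exact hab'.trans (h.mono hdle)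
  have hconn : K.Connected := by
    rw [connected_iff]
    exact ⟨fun u v => (hreach u).symm.trans (hreach v), ⟨a⟩⟩
  have hacyc : K.IsAcyclic := by
    intro v c hc
    by_cases hm : s(x, y) ∈ c.edges
    · have hKH : (K \ fromEdgeSet {s(x,y)}) ≤ Hd := by
        intro u w huw
        rcases huw with ⟨h1, h2⟩
        rcases h1 with h1 | h1
        · exact h1
        · exfalso
          rw [edge_adj] at h1
          apply h2
          constructor
          · rcases h1.1 with ⟨rfl, rfl⟩ | ⟨rfl, rfl⟩
            · exact rfl
            · exact Sym2.eq_swap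
          · exact h1.2
      have hbridge : K.IsBridge s(x, y) := by
        rw [isBridge_iff]
        exact fun hr => hsep (hr.mono hKH)
      exact (isBridge_iff_forall_cycle_notMem (K.mem_edgeSet.mpr hKadj)).mp hbridge c hc hm
    · have hsub : ∀ e ∈ c.edges, e ∈ H.edgeSet := by
        intro e he
        have heK : e ∈ K.edgeSet := c.edges_subset_edgeSet he
        rw [hK, edgeSet_sup] at heK
        rcases heK with h1 | h1
        · rw [hHd, edgeSet_deleteEdges] at h1
          exact h1.1
        · exfalso
          have : e ∈ ({s(x,y)} : Set (Sym2 V)) \ {e' : Sym2 V | e'.IsDiag} := by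
            rwa [show edge x y = fromEdgeSet {s(x,y)} from rfl, edgeSet_fromEdgeSet] at h1
          rw [Set.mem_diff, Set.mem_singleton_iff] at this
          exact hm (this.1 ▸ he)
      exact hH.IsAcyclic (c.transfer H hsub) (hc.transfer hsub)
  exact ⟨hconn, hacyc⟩

private lemma toFinset_congr {α : Type*} [Finite α] {A B : Set α} (h : A = B) :
    A.toFinite.toFinset = B.toFinite.toFinset := by
  subst h; rfl

private lemma sum_swap {α : Type*} [Finite α] (A : Set α) (e g : α)
    (he : e ∈ A) (hg : g ∉ A) (h : α → ℝ) :
    ∑ z ∈ ((A \ {e}) ∪ {g} : Set α).toFinite.toFinset, h z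
      = ∑ z ∈ A.toFinite.toFinset, h z - h e + h g := by
  classical
  have h1 : ((A \ {e}) ∪ {g} : Set α).toFinite.toFinset
      = (A.toFinite.toFinset.erase e) ∪ {g} := by
    ext z
    simp only [Set.Finite.mem_toFinset, Set.mem_union, Set.mem_diff, Set.mem_singleton_iff,
      Finset.mem_union, Finset.mem_erase, Finset.mem_singleton]
    tauto
  have hd : Disjoint (A.toFinite.toFinset.erase e) ({g} : Finset α) := by
    simp only [Finset.disjoint_singleton_right, Finset.mem_erase, Set.Finite.mem_toFinset]
    tauto
  rw [h1, Finset.sum_union hd, Finset.sum_erase_eq_sub (by simpa using he), Finset.sum_singleton]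

private lemma tree_card {V : Type*} [Fintype V] {H : SimpleGraph V} (h : H.IsTree) :
    H.edgeSet.toFinite.toFinset.card + 1 = Fintype.card V := by
  classical
  haveI : Fintype H.edgeSet := H.edgeSet.toFinite.fintype
  have hc := h.card_edgeFinset
  have he : H.edgeSet.toFinite.toFinset = H.edgeFinset := by
    ext z; rw [Set.Finite.mem_toFinset, mem_edgeFinset]
  rwa [he]

end Aux

/-- If `T` is a minimum-weight spanning tree of a finite connected simple graph `G` with
edge weights `w`, then for every nondecreasing `f : ℝ → ℝ`, `T` also minimizes
`∑ f(w(e))` among all spanning trees of `G`.  A spanning tree of `G` is a subgraph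
(on the same vertex set) `T ≤ G` which is a tree. -/
theorem stmt5 {V : Type*} [Fintype V] (G : SimpleGraph V) (hG : G.Connected)
    (w : Sym2 V → ℝ) (T : SimpleGraph V) (hTG : T ≤ G) (hT : T.IsTree)
    (hmin : ∀ T' : SimpleGraph V, T' ≤ G → T'.IsTree →
      ∑ e ∈ T.edgeSet.toFinite.toFinset, w e ≤
      ∑ e ∈ T'.edgeSet.toFinite.toFinset, w e)
    (f : ℝ → ℝ) (hf : Monotone f)
    (T' : SimpleGraph V) (hT'G : T' ≤ G) (hT' : T'.IsTree) :
    ∑ e ∈ T.edgeSet.toFinite.toFinset, f (w e) ≤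
    ∑ e ∈ T'.edgeSet.toFinite.toFinset, f (w e) := by
  classical
  suffices H : ∀ n (T' : SimpleGraph V), T' ≤ G → T'.IsTree →
      ((T.edgeSet \ T'.edgeSet).toFinite.toFinset).card = n →
      ∑ e ∈ T.edgeSet.toFinite.toFinset, f (w e) ≤
      ∑ e ∈ T'.edgeSet.toFinite.toFinset, f (w e) by
    exact H _ T' hT'G hT' rfl
  intro n
  induction n using Nat.strong_induction_on with
  | _ n ih =>
  intro T' hT'G hT' hcard
  by_cases hsub : T.edgeSet ⊆ T'.edgeSet
  · have h1 : T.edgeSet.toFinite.toFinset ⊆ T'.edgeSet.toFinite.toFinset := by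
      intro z hz
      rw [Set.Finite.mem_toFinset] at hz ⊢
      exact hsub hz
    have h2 : T'.edgeSet.toFinite.toFinset.card ≤ T.edgeSet.toFinite.toFinset.card := by
      have := tree_card hT
      have := tree_card hT'
      omega
    rw [Finset.eq_of_subset_of_card_le h1 h2]
  · obtain ⟨e, heT, heT'⟩ := Set.not_subset.mp hsub
    induction e using Sym2.ind with
    | _ a b =>
    have hab : T.Adj a b := heT
    -- the deleted-edge graph and the separation it induces
    set Td := T.deleteEdges {s(a,b)} with hTd
    have hbr : ¬ Td.Reachable a b := by
      have hbridge := (isAcyclic_iff_forall_adj_isBridge.mp hT.IsAcyclic) hab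
      rw [isBridge_iff] at hbridge
      exact hbridge
    -- a path from a to b in T'
    obtain ⟨p0⟩ := hT'.isConnected.preconnected a b
    set p' : T'.Path a b := p0.toPath with hp'
    -- find the crossing edge g = s(x,y)
    have haS : Td.Reachable a a := Reachable.refl _
    obtain ⟨x, y, hxyT', hxS, hyS, hgmem⟩ :=
      cross_edge (S := {v | Td.Reachable a v}) p'.val haS hbr
    have hgT' : s(x, y) ∈ T'.edgeSet := hxyT'
    have hge : s(x, y) ≠ s(a, b) := fun h => heT' (h ▸ hgT')
    have hgT : s(x, y) ∉ T.edgeSet := by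
      intro h
      apply hyS
      refine hxS.trans (Adj.reachable ?_)
      rw [hTd, deleteEdges_adj]
      exact ⟨h, by simpa using hge⟩
    -- the tree T₂ = T - e + g
    have hsep2 : ¬ Td.Reachable x y := fun r => hyS (hxS.trans r)
    have hT2 : (Td ⊔ edge x y).IsTree := swap_tree hT hab (T'.ne_of_adj hxyT') hsep2
    have hedge_le : ∀ {u v : V}, G.Adj u v → edge u v ≤ G := by
      intro u v h p q hpq
      rw [edge_adj] at hpq
      rcases hpq.1 with ⟨rfl, rfl⟩ | ⟨rfl, rfl⟩
      · exact h
      · exact h.symm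
    have hT2G : Td ⊔ edge x y ≤ G :=
      sup_le ((deleteEdges_le _).trans hTG) (hedge_le (hT'G hxyT'))
    have hedgeE : ∀ u v : V, u ≠ v → (edge u v).edgeSet = {s(u, v)} := by
      intro u v huv
      rw [show edge u v = fromEdgeSet {s(u,v)} from rfl, edgeSet_fromEdgeSet]
      ext z
      simp only [Set.mem_diff, Set.mem_singleton_iff, Set.mem_setOf_eq]
      constructor
      · exact fun h => h.1
      · rintro rfl
        exact ⟨rfl, by simp [Sym2.mk_isDiag_iff, huv]⟩
    have hE2 : (Td ⊔ edge x y).edgeSet = (T.edgeSet \ {s(a,b)}) ∪ {s(x,y)} := by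
      rw [edgeSet_sup, hTd, edgeSet_deleteEdges, hedgeE x y (T'.ne_of_adj hxyT')]
    -- minimality gives w e ≤ w g
    have hwsum := hmin _ hT2G hT2
    rw [toFinset_congr hE2, sum_swap T.edgeSet s(a,b) s(x,y) heT hgT w] at hwsum
    have hweg : w s(a, b) ≤ w s(x, y) := by linarith
    -- the tree T'' = T' - g + e
    set T'd := T'.deleteEdges {s(x,y)} with hT'd
    have hsep3 : ¬ T'd.Reachable a b := by
      intro r
      obtain ⟨q0⟩ := r
      have hq0 : ∀ e ∈ q0.edges, e ∈ T'.edgeSet := by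
        intro e he
        have := q0.edges_subset_edgeSet he
        rw [hT'd, edgeSet_deleteEdges] at this
        exact this.1
      set q : T'.Path a b := (q0.transfer T' hq0).toPath with hq
      have hgq : s(x, y) ∉ q.val.edges := by
        intro hmem
        have h1 : s(x, y) ∈ (q0.transfer T' hq0).edges :=
          Walk.edges_toPath_subset _ hmem
        rw [Walk.edges_transfer] at h1
        have h2 := q0.edges_subset_edgeSet h1
        rw [hT'd, edgeSet_deleteEdges] at h2
        exact h2.2 rfl
      have := hT'.IsAcyclic.path_unique p' q
      rw [this] at hgmem
      exact hgq hgmem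
    have hT'' : (T'd ⊔ edge a b).IsTree := swap_tree hT' hxyT' (T.ne_of_adj hab) hsep3
    have hT''G : T'd ⊔ edge a b ≤ G :=
      sup_le ((deleteEdges_le _).trans hT'G) (hedge_le (hTG hab))
    have hE'' : (T'd ⊔ edge a b).edgeSet = (T'.edgeSet \ {s(x,y)}) ∪ {s(a,b)} := by
      rw [edgeSet_sup, hT'd, edgeSet_deleteEdges, hedgeE a b (T.ne_of_adj hab)]
    -- sum over T'' for f ∘ w
    have hfsum : ∑ z ∈ (T'd ⊔ edge a b).edgeSet.toFinite.toFinset, f (w z)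
        = ∑ z ∈ T'.edgeSet.toFinite.toFinset, f (w z) - f (w s(x,y)) + f (w s(a,b)) := by
      rw [toFinset_congr hE'', sum_swap T'.edgeSet s(x,y) s(a,b) hgT' (fun h => heT' h)
        (fun z => f (w z))]
    -- measure decreases
    have hDset : T.edgeSet \ (T'd ⊔ edge a b).edgeSet
        = (T.edgeSet \ T'.edgeSet) \ {s(a,b)} := by
      rw [hE'']
      ext z
      simp only [Set.mem_diff, Set.mem_union, Set.mem_singleton_iff, not_or, Set.mem_diff,
        not_and, not_not]
      constructor
      · rintro ⟨hzT, h2⟩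
        refine ⟨⟨hzT, fun hzT' => ?_⟩, h2.2⟩
        rcases h2 with ⟨h3, h4⟩
        rcases h3 hzT' with rfl
        exact hgT hzT
      · rintro ⟨⟨hzT, hzT'⟩, hne⟩
        exact ⟨hzT, fun h => absurd h hzT', hne⟩
    have hDcard : ((T.edgeSet \ (T'd ⊔ edge a b).edgeSet).toFinite.toFinset).card < n := by
      rw [toFinset_congr hDset]
      have h1 : ((T.edgeSet \ T'.edgeSet) \ {s(a,b)} : Set (Sym2 V)).toFinite.toFinset
          = ((T.edgeSet \ T'.edgeSet).toFinite.toFinset).erase s(a,b) := by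
        ext z
        simp only [Set.Finite.mem_toFinset, Set.mem_diff, Set.mem_singleton_iff,
          Finset.mem_erase]
        tauto
      rw [h1]
      have hmem : s(a,b) ∈ (T.edgeSet \ T'.edgeSet).toFinite.toFinset := by
        rw [Set.Finite.mem_toFinset]
        exact ⟨heT, heT'⟩
      have := Finset.card_erase_lt_of_mem hmem
      omega
    have hIH := ih _ hDcard (T'd ⊔ edge a b) hT''G hT'' rfl
    have hf' : f (w s(a,b)) ≤ f (w s(x,y)) := hf hweg
    rw [hfsum] at hIH
    linarith
end

section
/- Let (X,d) be a metric space, let r > 0, and let p = u_0, u_1, …, u_{l} = q be a sequence of points of X with d(u_j, u_{j+1}) ≤ r for all 0 ≤ j < l, where each interior point u_j (0 < j < l) is labeled either as a terminal or as a Steiner point, and exactly w of the interior points are Steiner points. Then there exists a subsequence p = u_{j_0}, u_{j_1}, …, u_{j_t} = q (with 0 = j_0 < j_1 < … < j_t = l) such that d(u_{j_i}, u_{j_{i+1}}) ≤ 2r for all 0 ≤ i < t and at most ⌊w/2⌋ of the points u_{j_1}, …, u_{j_{t-1}} are Steiner points. -/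
/-- Greedy pruning: delete a Steiner point, then unconditionally keep the next point. -/
def prune9 {X : Type*} : List (X × Bool) → List (X × Bool)
  | [] => []
  | [a] => if a.2 then [] else [a]
  | a :: b :: l => if a.2 then b :: prune9 l else a :: prune9 (b :: l)

theorem prune9_sublist {X : Type*} (l : List (X × Bool)) : (prune9 l).Sublist l := by
  induction l using prune9.induct with
  | case1 => simp [prune9]
  | case2 a ha => simp [prune9, ha]
  | case3 a ha => simp [prune9, ha]
  | case4 a b l ha ih => simpa [prune9, ha] using (ih.cons₂ b).cons a
  | case5 a b l ha ih => simpa [prune9, ha] using ih.cons₂ a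

theorem prune9_count {X : Type*} (l : List (X × Bool)) :
    ((prune9 l).filter (fun x => x.2)).length ≤ (l.filter (fun x => x.2)).length / 2 := by
  induction l using prune9.induct with
  | case1 => simp [prune9]
  | case2 a ha => simp [prune9, ha]
  | case3 a ha => simp [prune9, ha]
  | case4 a b l ha ih =>
      by_cases hb : b.2 <;> simp [prune9, ha, hb, List.filter_cons] at * <;> omega
  | case5 a b l ha ih =>
      simpa [prune9, ha, List.filter_cons] using ih

theorem prune9_chain {X : Type*} [MetricSpace X] (r : ℝ) (hr : 0 < r) (q : X)
    (l : List (X × Bool)) : ∀ p : X,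
    List.Chain' (fun a b => dist a b ≤ r) (p :: l.map Prod.fst ++ [q]) →
    List.Chain' (fun a b => dist a b ≤ 2 * r) (p :: (prune9 l).map Prod.fst ++ [q]) := by
  induction l using prune9.induct with
  | case1 =>
      intro p h
      simp only [List.map_nil, List.nil_append, prune9, List.isChain_cons_cons,
        List.isChain_singleton, and_true, List.cons_append, List.Chain'] at *
      linarith
  | case2 a ha =>
      intro p h
      simp only [List.map_cons, List.map_nil, List.cons_append, List.nil_append,
        List.isChain_cons_cons, List.isChain_singleton, and_true, prune9, ha, if_true, List.Chain'] at *
      calc dist p q ≤ dist p a.1 + dist a.1 q := dist_triangle _ _ _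
        _ ≤ 2 * r := by linarith [h.1, h.2]
  | case3 a ha =>
      intro p h
      simp only [List.map_cons, List.map_nil, List.cons_append, List.nil_append,
        List.isChain_cons_cons, List.isChain_singleton, and_true, List.Chain'] at h
      simp only [prune9, if_neg ha, List.map_cons, List.map_nil, List.cons_append,
        List.nil_append, List.isChain_cons_cons, List.isChain_singleton, and_true, List.Chain']
      exact ⟨by linarith [h.1], by linarith [h.2]⟩
  | case4 a b l ha ih =>
      intro p h
      simp only [List.map_cons, List.cons_append, List.isChain_cons_cons, List.Chain'] at h
      obtain ⟨hpa, hab, h'⟩ := h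
      have := ih b.1 h'
      simp only [prune9, ha, if_true, List.map_cons, List.cons_append, List.isChain_cons_cons, List.Chain']
      refine ⟨?_, this⟩
      calc dist p b.1 ≤ dist p a.1 + dist a.1 b.1 := dist_triangle _ _ _
        _ ≤ 2 * r := by linarith
  | case5 a b l ha ih =>
      intro p h
      simp only [List.map_cons, List.cons_append, List.isChain_cons_cons, List.Chain'] at h
      obtain ⟨hpa, h'⟩ := h
      have := ih a.1 (by simpa [List.isChain_cons_cons, List.Chain'] using h')
      simp only [prune9, if_neg ha, List.map_cons, List.cons_append,
        List.isChain_cons_cons, List.Chain'] at this ⊢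
      exact ⟨by linarith, this⟩

/-- A sequence `p = u_0, u_1, …, u_l = q` in a metric space with all consecutive distances
at most `r`, whose interior points are labeled as terminals (`false`) or Steiner points
(`true`), is encoded by the endpoints `p, q` and the list `int` of interior points with
their labels.  One can pass to a subsequence of the interior points (a `List.Sublist`,
i.e. keeping the relative order, and keeping the endpoints `p` and `q`) such that all
consecutive distances are at most `2r` and at most `⌊w/2⌋` of the retained interior
points are Steiner points, where `w` is the number of Steiner points among the interior
points of the original sequence. -/
theorem stmt9 {X : Type*} [MetricSpace X] (r : ℝ) (hr : 0 < r) (p q : X)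
    (int : List (X × Bool))
    (h : List.Chain' (fun a b => dist a b ≤ r) (p :: int.map Prod.fst ++ [q])) :
    ∃ int' : List (X × Bool), int'.Sublist int ∧
      List.Chain' (fun a b => dist a b ≤ 2 * r) (p :: int'.map Prod.fst ++ [q]) ∧
      (int'.filter (fun x => x.2)).length ≤ (int.filter (fun x => x.2)).length / 2 := by
  exact ⟨prune9 int, prune9_sublist int, prune9_chain r hr q int p h, prune9_count int⟩
end
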